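/- The Motzkin polynomial 1 + X_1^2 X_2^4 + X_1^4 X_2^2 − 3 X_1^2 X_2^2 is not a sum of squares of real polynomials: there exist no polynomials g_1, ..., g_r ∈ ℝ[X_1, X_2] with 1 + X_1^2 X_2^4 + X_1^4 X_2^2 − 3 X_1^2 X_2^2 = g_1^2 + ... + g_r^2. -/

import Mathlib

open MvPolynomial


lemma real_sum_sq_zero : ∀ (r : ℕ) (f : Fin r → ℝ), ∑ i, f i ^ 2 = 0 → ∀ i, f i = 0 := by
  intro r f h i
  have := (Finset.sum_eq_zero_iff_of_nonneg (fun j _ => sq_nonneg (f j))).mp h i (Finset.mem_univ i)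
  exact pow_eq_zero_iff (by norm_num) |>.mp this

lemma descent {R : Type*} [CommRing R]
    (hreal : ∀ (r : ℕ) (f : Fin r → R), ∑ i, f i ^ 2 = 0 → ∀ i, f i = 0)
    {r : ℕ} (h : Fin r → Polynomial R) (P : Polynomial R)
    (hE : ∑ i, h i ^ 2 = P) (N : ℕ) (hP : P.natDegree ≤ 2 * N + 1) :
    ∀ i, (h i).natDegree ≤ N := by
  have key : ∀ B, N ≤ B → (∀ i, (h i).natDegree ≤ B + 1) → ∀ i, (h i).natDegree ≤ B := by
    intro B hNB hB
    have h0 : P.coeff (2 * B + 2) = 0 :=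
      Polynomial.coeff_eq_zero_of_natDegree_lt (by omega)
    have h1 : ∀ i, (h i ^ 2).coeff (2 * B + 2) = ((h i).coeff (B + 1)) ^ 2 := by
      intro i
      rw [sq, Polynomial.coeff_mul, Finset.sum_eq_single ((B + 1, B + 1) : ℕ × ℕ)]
      · rw [sq]
      · intro p hp hne
        rw [Finset.HasAntidiagonal.mem_antidiagonal] at hp
        have hlt : B + 1 < p.1 ∨ B + 1 < p.2 := by
          have h2 : ¬(p.1 = B + 1 ∧ p.2 = B + 1) := fun hc => hne (Prod.ext hc.1 hc.2)
          omega
        rcases hlt with hlt | hlt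
        · rw [Polynomial.coeff_eq_zero_of_natDegree_lt (lt_of_le_of_lt (hB i) hlt), zero_mul]
        · rw [Polynomial.coeff_eq_zero_of_natDegree_lt (lt_of_le_of_lt (hB i) hlt), mul_zero]
      · intro habs
        exact absurd (Finset.HasAntidiagonal.mem_antidiagonal.mpr (by omega)) habs
    have hsum : ∑ i, ((h i).coeff (B + 1)) ^ 2 = 0 := by
      have := congrArg (fun p => Polynomial.coeff p (2 * B + 2)) hE
      simp only [Polynomial.finset_sum_coeff] at this
      rw [← h0, ← this]
      exact Finset.sum_congr rfl fun i _ => (h1 i).symm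
    have hc := hreal _ _ hsum
    intro i
    rw [Polynomial.natDegree_le_iff_coeff_eq_zero]
    intro m hm
    rcases eq_or_lt_of_le (Nat.succ_le_of_lt hm) with he | hlt
    · rw [← he]; exact hc i
    · exact Polynomial.coeff_eq_zero_of_natDegree_lt (lt_of_le_of_lt (hB i) hlt)
  have main : ∀ m, (∀ i, (h i).natDegree ≤ N + m) → ∀ i, (h i).natDegree ≤ N := by
    intro m
    induction m with
    | zero => simpa using id
    | succ k ih =>
      intro hb
      exact ih (key (N + k) (by omega) (by intro i; have := hb i; omega))
  refine main (Finset.univ.sup fun i => (h i).natDegree) (fun i => ?_)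
  calc (h i).natDegree ≤ Finset.univ.sup fun i => (h i).natDegree :=
        Finset.le_sup (f := fun i => (h i).natDegree) (Finset.mem_univ i)
    _ ≤ N + Finset.univ.sup fun i => (h i).natDegree := Nat.le_add_left _ _

lemma real_poly_sum_sq_zero : ∀ (r : ℕ) (f : Fin r → Polynomial ℝ), ∑ i, f i ^ 2 = 0 → ∀ i, f i = 0 := by
  intro r f h i
  have hdeg : ∀ j, (f j).natDegree ≤ 0 := descent real_sum_sq_zero f 0 h 0 (by simp)
  have h0 : ∑ j, ((f j).coeff 0) ^ 2 = 0 := by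
    have := congrArg (fun p => Polynomial.coeff p 0) h
    simpa [Polynomial.finset_sum_coeff, sq, Polynomial.mul_coeff_zero] using this
  have := real_sum_sq_zero _ _ h0 i
  rw [Polynomial.eq_C_of_natDegree_le_zero (hdeg i), this, map_zero]


lemma mcoeff0 {R : Type*} [CommRing R] (p q : Polynomial R) :
    (p * q).coeff 0 = p.coeff 0 * q.coeff 0 := Polynomial.mul_coeff_zero p q

lemma mcoeff2 {R : Type*} [CommRing R] (p q : Polynomial R) :
    (p * q).coeff 2 = p.coeff 0 * q.coeff 2 + p.coeff 1 * q.coeff 1 + p.coeff 2 * q.coeff 0 := by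
  rw [Polynomial.coeff_mul, Finset.Nat.sum_antidiagonal_eq_sum_range_succ_mk]
  simp [Finset.sum_range_succ]

lemma mcoeff4 {R : Type*} [CommRing R] (p q : Polynomial R)
    (hp : p.natDegree ≤ 2) (hq : q.natDegree ≤ 2) :
    (p * q).coeff 4 = p.coeff 2 * q.coeff 2 := by
  rw [Polynomial.coeff_mul, Finset.Nat.sum_antidiagonal_eq_sum_range_succ_mk]
  simp [Finset.sum_range_succ]
  rw [Polynomial.coeff_eq_zero_of_natDegree_lt (show q.natDegree < 4 by omega),
    Polynomial.coeff_eq_zero_of_natDegree_lt (show q.natDegree < 3 by omega),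
    Polynomial.coeff_eq_zero_of_natDegree_lt (show p.natDegree < 3 by omega),
    Polynomial.coeff_eq_zero_of_natDegree_lt (show p.natDegree < 4 by omega)]
  ring

lemma decomp {R : Type*} [CommRing R] (p : Polynomial R) (h : p.natDegree ≤ 2) :
    p = Polynomial.C (p.coeff 0) + Polynomial.C (p.coeff 1) * Polynomial.X
      + Polynomial.C (p.coeff 2) * Polynomial.X ^ 2 := by
  ext n
  match n with
  | 0 => simp
  | 1 => simp
  | 2 => simp [Polynomial.coeff_X_pow]
  | (n+3) =>
    rw [Polynomial.coeff_eq_zero_of_natDegree_lt (show p.natDegree < n + 3 by omega)]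
    simp [Polynomial.coeff_X_pow, Polynomial.coeff_C]

/-- The Motzkin polynomial `1 + X₁²X₂⁴ + X₁⁴X₂² - 3X₁²X₂²` is not a sum of squares
of real polynomials. -/
theorem motzkin_not_sos :
    ¬ ∃ (r : ℕ) (g : Fin r → MvPolynomial (Fin 2) ℝ),
      (1 + (X 0) ^ 2 * (X 1) ^ 4 + (X 0) ^ 4 * (X 1) ^ 2
        - 3 * (X 0) ^ 2 * (X 1) ^ 2 : MvPolynomial (Fin 2) ℝ)
        = ∑ i : Fin r, (g i) ^ 2 := by
  rintro ⟨r, g, hg⟩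
  set ψ : MvPolynomial (Fin 2) ℝ →ₐ[ℝ] Polynomial (Polynomial ℝ) :=
    MvPolynomial.aeval ![Polynomial.X, Polynomial.C Polynomial.X] with hψ
  set P : Polynomial (Polynomial ℝ) :=
    Polynomial.C 1 + Polynomial.C (Polynomial.X ^ 4 - 3 * Polynomial.X ^ 2) * Polynomial.X ^ 2
      + Polynomial.C (Polynomial.X ^ 2) * Polynomial.X ^ 4 with hPdef
  set A : Fin r → Polynomial (Polynomial ℝ) := fun i => ψ (g i) with hAdef
  have hE : ∑ i, A i ^ 2 = P := by
    simp only [hAdef, hPdef, hψ]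
    have h1 := congrArg ψ hg
    rw [map_sum] at h1
    simp only [hψ] at h1
    simp only [map_add, map_sub, map_mul, map_pow, map_one, map_ofNat,
      MvPolynomial.aeval_X, Matrix.cons_val_zero, Matrix.cons_val_one, Matrix.head_cons] at h1
    rw [← h1]
    simp only [map_sub, map_pow, map_mul, map_one, map_ofNat]
    ring
  have hP0 : P.coeff 0 = 1 := by
    simp only [hPdef, Polynomial.coeff_add, Polynomial.coeff_C_mul, Polynomial.coeff_X_pow,
      Polynomial.coeff_one, Polynomial.coeff_C]
    norm_num
  have hP2 : P.coeff 2 = Polynomial.X ^ 4 - 3 * Polynomial.X ^ 2 := by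
    simp only [hPdef, Polynomial.coeff_add, Polynomial.coeff_C_mul, Polynomial.coeff_X_pow,
      Polynomial.coeff_one, Polynomial.coeff_C]
    norm_num
  have hP4 : P.coeff 4 = Polynomial.X ^ 2 := by
    simp only [hPdef, Polynomial.coeff_add, Polynomial.coeff_C_mul, Polynomial.coeff_X_pow,
      Polynomial.coeff_one, Polynomial.coeff_C]
    norm_num
  have hPdeg : P.natDegree ≤ 5 := by
    rw [hPdef]
    compute_degree!
  have hAdeg : ∀ i, (A i).natDegree ≤ 2 :=
    descent real_poly_sum_sq_zero A P hE 2 hPdeg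
  -- evaluation of outer variable
  have hx : ∀ x : ℝ, ∑ i, (Polynomial.eval (Polynomial.C x) (A i)) ^ 2
      = Polynomial.eval (Polynomial.C x) P := by
    intro x
    have := congrArg (Polynomial.eval (Polynomial.C x)) hE
    simpa [Polynomial.eval_finset_sum] using this
  have hPx : ∀ x : ℝ, (Polynomial.eval (Polynomial.C x) P).natDegree ≤ 5 := by
    intro x
    have h1 : Polynomial.eval (Polynomial.C x) P
        = Polynomial.C 1 + (Polynomial.X ^ 4 - 3 * Polynomial.X ^ 2) * Polynomial.C (x ^ 2)
          + Polynomial.X ^ 2 * Polynomial.C (x ^ 4) := by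
      simp [hPdef, map_pow]
    rw [h1]
    compute_degree!
  have hAx : ∀ (x : ℝ) i, (Polynomial.eval (Polynomial.C x) (A i)).natDegree ≤ 2 :=
    fun x => descent real_sum_sq_zero _ _ (hx x) 2 (hPx x)
  have hinner : ∀ i a, ((A i).coeff a).natDegree ≤ 2 := by
    intro i a
    by_cases ha : a ≤ 2
    · rw [Polynomial.natDegree_le_iff_coeff_eq_zero]
      intro b hb
      have hkey : ∀ x : ℝ, ((A i).coeff 0).coeff b + ((A i).coeff 1).coeff b * x
          + ((A i).coeff 2).coeff b * x ^ 2 = 0 := by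
        intro x
        have h1 : Polynomial.eval (Polynomial.C x) (A i)
            = (A i).coeff 0 + (A i).coeff 1 * Polynomial.C x
              + (A i).coeff 2 * Polynomial.C (x ^ 2) := by
          conv_lhs => rw [decomp (A i) (hAdeg i)]
          simp [map_pow]
        have h2 := congrArg (fun p => Polynomial.coeff p b) h1
        simp only [Polynomial.coeff_eq_zero_of_natDegree_lt (lt_of_le_of_lt (hAx x i) hb),
          Polynomial.coeff_add, Polynomial.coeff_mul_C] at h2
        linarith [h2]
      have h0 := hkey 0
      have hp1 := hkey 1
      have hm1 := hkey (-1)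
      norm_num at h0 hp1 hm1
      interval_cases a <;> linarith
    · rw [Polynomial.coeff_eq_zero_of_natDegree_lt (lt_of_le_of_lt (hAdeg i) (by omega))]
      simp
  -- coefficient equations
  have hsum : ∀ (a b : ℕ), ∑ i, ((A i ^ 2).coeff a).coeff b = (P.coeff a).coeff b := by
    intro a b
    have := congrArg (fun p => (Polynomial.coeff p a).coeff b) hE
    simpa only [Polynomial.finset_sum_coeff] using this
  -- (4,4) : c22 = 0
  have h22 : ∀ i, ((A i).coeff 2).coeff 2 = 0 := by
    apply real_sum_sq_zero
    calc ∑ i, ((A i).coeff 2).coeff 2 ^ 2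
        = ∑ i, ((A i ^ 2).coeff 4).coeff 4 := by
          refine Finset.sum_congr rfl fun i _ => ?_
          rw [pow_two (A i), mcoeff4 _ _ (hAdeg i) (hAdeg i),
            mcoeff4 _ _ (hinner i 2) (hinner i 2), ← pow_two]
      _ = (P.coeff 4).coeff 4 := hsum 4 4
      _ = 0 := by rw [hP4]; simp [Polynomial.coeff_X_pow]
  have h20 : ∀ i, ((A i).coeff 2).coeff 0 = 0 := by
    apply real_sum_sq_zero
    calc ∑ i, ((A i).coeff 2).coeff 0 ^ 2
        = ∑ i, ((A i ^ 2).coeff 4).coeff 0 := by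
          refine Finset.sum_congr rfl fun i _ => ?_
          rw [pow_two (A i), mcoeff4 _ _ (hAdeg i) (hAdeg i), mcoeff0, ← pow_two]
      _ = (P.coeff 4).coeff 0 := hsum 4 0
      _ = 0 := by rw [hP4]; simp [Polynomial.coeff_X_pow]
  have h02 : ∀ i, ((A i).coeff 0).coeff 2 = 0 := by
    apply real_sum_sq_zero
    calc ∑ i, ((A i).coeff 0).coeff 2 ^ 2
        = ∑ i, ((A i ^ 2).coeff 0).coeff 4 := by
          refine Finset.sum_congr rfl fun i _ => ?_
          rw [pow_two (A i), mcoeff0, mcoeff4 _ _ (hinner i 0) (hinner i 0), ← pow_two]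
      _ = (P.coeff 0).coeff 4 := hsum 0 4
      _ = 0 := by rw [hP0]; simp [Polynomial.coeff_one]
  have h01 : ∀ i, ((A i).coeff 0).coeff 1 = 0 := by
    apply real_sum_sq_zero
    calc ∑ i, ((A i).coeff 0).coeff 1 ^ 2
        = ∑ i, ((A i ^ 2).coeff 0).coeff 2 := by
          refine Finset.sum_congr rfl fun i _ => ?_
          rw [pow_two (A i), mcoeff0, mcoeff2, h02 i]
          ring
      _ = (P.coeff 0).coeff 2 := hsum 0 2
      _ = 0 := by rw [hP0]; simp [Polynomial.coeff_one]
  have h10 : ∀ i, ((A i).coeff 1).coeff 0 = 0 := by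
    apply real_sum_sq_zero
    calc ∑ i, ((A i).coeff 1).coeff 0 ^ 2
        = ∑ i, ((A i ^ 2).coeff 2).coeff 0 := by
          refine Finset.sum_congr rfl fun i _ => ?_
          rw [pow_two (A i), mcoeff2, Polynomial.coeff_add, Polynomial.coeff_add,
            mcoeff0, mcoeff0, mcoeff0, h20 i]
          ring
      _ = (P.coeff 2).coeff 0 := hsum 2 0
      _ = 0 := by rw [hP2]; simp [Polynomial.coeff_X_pow]
  have hfinal : ∑ i, ((A i).coeff 1).coeff 1 ^ 2 = -3 := by
    calc ∑ i, ((A i).coeff 1).coeff 1 ^ 2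
        = ∑ i, ((A i ^ 2).coeff 2).coeff 2 := by
          refine Finset.sum_congr rfl fun i _ => ?_
          rw [pow_two (A i), mcoeff2, Polynomial.coeff_add, Polynomial.coeff_add,
            mcoeff2, mcoeff2, mcoeff2, h22 i, h02 i, h20 i, h01 i, h10 i]
          ring
      _ = (P.coeff 2).coeff 2 := hsum 2 2
      _ = -3 := by rw [hP2]; simp [Polynomial.coeff_X_pow]
  have hnn : (0:ℝ) ≤ ∑ i, ((A i).coeff 1).coeff 1 ^ 2 :=
    Finset.sum_nonneg fun i _ => sq_nonneg _
  linarith
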